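/- Let ρ > 0 and let N ≥ 2 be an integer. Define P(θ, η) = (1/ρ) [ u − log u − 1 ] with u = u(θ,η) = (1+θ+η)/(1+θ+η/N), for θ > 0 and η > 0. Then: (i) for every fixed η > 0, the map θ ↦ P(θ,η) is strictly decreasing on (0,∞); (ii) for every fixed θ > 0, the map η ↦ P(θ,η) is strictly increasing on (0,∞). -/
import Mathlib


open Real

/-- `x ↦ x - log x - 1` is strictly increasing on `[1, ∞)`. -/
lemma f_strictMono (a b : ℝ) (ha : 1 ≤ a) (hab : a < b) :
    a - Real.log a - 1 < b - Real.log b - 1 := by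
  have ha0 : 0 < a := lt_of_lt_of_le one_pos ha
  have hb0 : 0 < b := ha0.trans hab
  have h1 : Real.log b - Real.log a = Real.log (b / a) :=
    (Real.log_div hb0.ne' ha0.ne').symm
  have hba : 1 < b / a := (one_lt_div ha0).2 hab
  have h2 : Real.log (b / a) < b / a - 1 :=
    Real.log_lt_sub_one_of_pos (by positivity) hba.ne'
  have h3 : b / a - 1 ≤ b - a := by
    have : (b - a) / a ≤ b - a := div_le_self (by linarith) ha
    have e : b / a - 1 = (b - a) / a := by field_simp
    linarith
  linarith

/-- Monotonicity of the Price of Anarchy `P(θ,η) = (1/ρ)[u − log u − 1]`,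
`u = (1+θ+η)/(1+θ+η/N)`: strictly decreasing in `θ`, strictly increasing in `η`. -/
theorem stmt_11 (ρ : ℝ) (hρ : 0 < ρ) (N : ℕ) (hN : 2 ≤ N)
    (P : ℝ → ℝ → ℝ)
    (hP : ∀ θ η : ℝ, P θ η = (1 / ρ) * ((1 + θ + η) / (1 + θ + η / N)
        - Real.log ((1 + θ + η) / (1 + θ + η / N)) - 1)) :
    (∀ η : ℝ, 0 < η → StrictAntiOn (fun θ : ℝ => P θ η) (Set.Ioi 0)) ∧
    (∀ θ : ℝ, 0 < θ → StrictMonoOn (fun η : ℝ => P θ η) (Set.Ioi 0)) := by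
  have hn : (2 : ℝ) ≤ (N : ℝ) := by exact_mod_cast hN
  have hn0 : (0 : ℝ) < (N : ℝ) := by linarith
  have hρ' : 0 < 1 / ρ := by positivity
  -- u > 1 for θ, η > 0
  have hu1 : ∀ θ η : ℝ, 0 < θ → 0 < η →
      1 < (1 + θ + η) / (1 + θ + η / N) := by
    intro θ η hθ hη
    have hc : η / N < η := div_lt_self hη (by linarith)
    have hc0 : 0 < η / N := by positivity
    rw [one_lt_div (by linarith)]
    linarith
  constructor
  · intro η hη θ1 h1 θ2 h2 h12
    simp only [Set.mem_Ioi] at h1 h2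
    have hc : η / N < η := div_lt_self hη (by linarith)
    have hc0 : 0 < η / N := by positivity
    have hlt : (1 + θ2 + η) / (1 + θ2 + η / N) < (1 + θ1 + η) / (1 + θ1 + η / N) := by
      rw [div_lt_div_iff₀ (by linarith) (by linarith)]
      nlinarith [mul_pos (sub_pos.2 h12) (sub_pos.2 hc)]
    have := f_strictMono _ _ (le_of_lt (hu1 θ2 η h2 hη)) hlt
    simp only [hP]
    exact mul_lt_mul_of_pos_left this hρ'
  · intro θ hθ η1 h1 η2 h2 h12
    simp only [Set.mem_Ioi] at h1 h2
    have hkey : η2 / N - η1 / N < η2 - η1 := by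
      have : (η2 - η1) / N < η2 - η1 := div_lt_self (by linarith) (by linarith)
      have e : (η2 - η1) / N = η2 / N - η1 / N := by ring
      linarith
    have heq : η1 * (η2 / N) = η2 * (η1 / N) := by ring
    have hlt : (1 + θ + η1) / (1 + θ + η1 / N) < (1 + θ + η2) / (1 + θ + η2 / N) := by
      have hc10 : 0 < η1 / N := by positivity
      have hc20 : 0 < η2 / N := by positivity
      rw [div_lt_div_iff₀ (by linarith) (by linarith)]
      nlinarith [mul_lt_mul_of_pos_left hkey (show (0:ℝ) < 1 + θ by linarith)]
    have := f_strictMono _ _ (le_of_lt (hu1 θ η1 hθ h1)) hlt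
    simp only [hP]
    exact mul_lt_mul_of_pos_left this hρ'
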